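/- arXiv:1706.09961 — 2 statements merged into one kernel-verified Lean document; each statement's English description precedes it below -/
import Mathlib

section
/- Change of variables in the collision integral: for every unit vector ω ∈ ℝ^d and every measurable function F : ℝ^d × ℝ^d → [0, ∞], one has ∫∫ [ω · (v₂ − v)]₊ F(v*, v₂*) dv dv₂ = ∫∫ [ω · (v₂ − v)]₋ F(v, v₂) dv dv₂, where both integrals are over ℝ^d × ℝ^d with respect to Lebesgue measure, and [r]₊ = max(r,0), [r]₋ = max(−r,0). -/
open scoped RealInnerProductSpace ENNReal
open MeasureTheory

/-- Shearing the second coordinate by a translation depending on the first preserves volume. -/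
lemma aux_skew_snd {d : ℕ} (g : EuclideanSpace ℝ (Fin d) → EuclideanSpace ℝ (Fin d))
    (hg : Measurable g) :
    MeasurePreserving (fun p : EuclideanSpace ℝ (Fin d) × EuclideanSpace ℝ (Fin d) =>
      (p.1, p.2 + g p.1)) volume volume :=
  (MeasurePreserving.id (volume : Measure (EuclideanSpace ℝ (Fin d)))).skew_product
    (g := fun a y => y + g a)
    (measurable_snd.add (hg.comp measurable_fst))
    (Filter.Eventually.of_forall fun a =>
      (measurePreserving_add_right volume (g a)).map_eq)

/-- Shearing the first coordinate by a translation depending on the second preserves volume. -/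
lemma aux_skew_fst {d : ℕ} (g : EuclideanSpace ℝ (Fin d) → EuclideanSpace ℝ (Fin d))
    (hg : Measurable g) :
    MeasurePreserving (fun p : EuclideanSpace ℝ (Fin d) × EuclideanSpace ℝ (Fin d) =>
      (p.1 + g p.2, p.2)) volume volume := by
  have hswap : MeasurePreserving (Prod.swap :
      EuclideanSpace ℝ (Fin d) × EuclideanSpace ℝ (Fin d) →
      EuclideanSpace ℝ (Fin d) × EuclideanSpace ℝ (Fin d)) volume volume :=
    Measure.measurePreserving_swap
  exact hswap.comp ((aux_skew_snd g hg).comp hswap)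

/-- Change of variables in the collision integral: for every unit vector `ω` and every
measurable `F : ℝ^d × ℝ^d → [0, ∞]`,
`∫∫ [ω · (v₂ − v)]₊ F(v*, v₂*) dv dv₂ = ∫∫ [ω · (v₂ − v)]₋ F(v, v₂) dv dv₂`. -/
theorem collision_change_of_variables (d : ℕ) (hd : 1 ≤ d)
    (ω : EuclideanSpace ℝ (Fin d)) (hω : ‖ω‖ = 1)
    (F : EuclideanSpace ℝ (Fin d) × EuclideanSpace ℝ (Fin d) → ℝ≥0∞)
    (hF : Measurable F) :
    ∫⁻ p : EuclideanSpace ℝ (Fin d) × EuclideanSpace ℝ (Fin d),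
        ENNReal.ofReal (max ⟪ω, p.2 - p.1⟫ 0) *
          F (p.1 + ⟪ω, p.2 - p.1⟫ • ω, p.2 - ⟪ω, p.2 - p.1⟫ • ω)
      = ∫⁻ p : EuclideanSpace ℝ (Fin d) × EuclideanSpace ℝ (Fin d),
        ENNReal.ofReal (max (-⟪ω, p.2 - p.1⟫) 0) * F p := by
  have hωω : ⟪ω, ω⟫ = 1 := by
    have := real_inner_self_eq_norm_sq ω
    rw [hω] at this; simpa using this
  have hcont : Continuous fun v : EuclideanSpace ℝ (Fin d) => ⟪ω, v⟫ :=
    continuous_const.inner continuous_id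
  -- the three shears
  have hS₁ : MeasurePreserving (fun p : EuclideanSpace ℝ (Fin d) × EuclideanSpace ℝ (Fin d) =>
      (p.1, p.2 + (-⟪ω, p.1⟫) • ω)) volume volume :=
    aux_skew_snd (fun v => (-⟪ω, v⟫) • ω) (hcont.neg.smul continuous_const).measurable
  have hS₂ : MeasurePreserving (fun p : EuclideanSpace ℝ (Fin d) × EuclideanSpace ℝ (Fin d) =>
      (p.1 + ⟪ω, p.2⟫ • ω, p.2)) volume volume :=
    aux_skew_fst (fun v => ⟪ω, v⟫ • ω) (hcont.smul continuous_const).measurable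
  -- reflection in the second variable
  have hrefl : MeasurePreserving
      (fun v : EuclideanSpace ℝ (Fin d) => v + (-(2 * ⟪ω, v⟫)) • ω) volume volume := by
    have h1 : ∀ v : EuclideanSpace ℝ (Fin d),
        (Submodule.reflection ((ℝ ∙ ω)ᗮ)) v = v + (-(2 * ⟪ω, v⟫)) • ω := by
      intro v
      rw [Submodule.reflection_orthogonal_apply, Submodule.reflection_singleton_apply, hω]
      push_cast
      simp only [one_pow, div_one]
      rw [two_smul]
      module
    have h2 := (Submodule.reflection ((ℝ ∙ ω)ᗮ)).measurePreserving
      (E := EuclideanSpace ℝ (Fin d))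
    rw [show (fun v : EuclideanSpace ℝ (Fin d) => v + (-(2 * ⟪ω, v⟫)) • ω)
        = ⇑(Submodule.reflection ((ℝ ∙ ω)ᗮ)) from funext fun v => (h1 v).symm]
    exact h2
  have hN : MeasurePreserving (fun p : EuclideanSpace ℝ (Fin d) × EuclideanSpace ℝ (Fin d) =>
      (p.1, p.2 + (-(2 * ⟪ω, p.2⟫)) • ω)) volume volume :=
    (MeasurePreserving.id (volume : Measure (EuclideanSpace ℝ (Fin d)))).skew_product
      (g := fun _ y => y + (-(2 * ⟪ω, y⟫)) • ω)
      (measurable_snd.add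
        ((((hcont.comp continuous_snd).const_smul (2:ℝ)).neg.smul continuous_const).measurable))
      (Filter.Eventually.of_forall fun _ => hrefl.map_eq)
  -- the full collision transform
  set T : EuclideanSpace ℝ (Fin d) × EuclideanSpace ℝ (Fin d) →
      EuclideanSpace ℝ (Fin d) × EuclideanSpace ℝ (Fin d) :=
    fun p => (p.1 + ⟪ω, p.2 - p.1⟫ • ω, p.2 - ⟪ω, p.2 - p.1⟫ • ω) with hT
  have hTcomp : ∀ p, T p =
      ((fun p : EuclideanSpace ℝ (Fin d) × EuclideanSpace ℝ (Fin d) =>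
          (p.1, p.2 + (-(2 * ⟪ω, p.2⟫)) • ω)) ∘
        (fun p => (p.1, p.2 + (-⟪ω, p.1⟫) • ω)) ∘
        (fun p => (p.1 + ⟪ω, p.2⟫ • ω, p.2)) ∘
        (fun p => (p.1, p.2 + (-⟪ω, p.1⟫) • ω))) p := by
    intro p
    simp only [Function.comp_apply, hT]
    obtain ⟨v, w⟩ := p
    simp only [inner_sub_right, inner_add_right, inner_smul_right, inner_neg_right, hωω]
    rw [Prod.mk.injEq]
    exact ⟨by module, by module⟩
  have hTmp : MeasurePreserving T volume volume := by
    have := (hN.comp (hS₁.comp (hS₂.comp hS₁)))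
    convert this using 1
    exact funext hTcomp
  -- the inner product flips sign under T
  have hflip : ∀ p : EuclideanSpace ℝ (Fin d) × EuclideanSpace ℝ (Fin d),
      ⟪ω, (T p).2 - (T p).1⟫ = -⟪ω, p.2 - p.1⟫ := by
    intro p
    simp only [hT]
    simp only [inner_sub_right, inner_add_right, inner_smul_right, hωω]
    ring
  -- the target integrand
  set G : EuclideanSpace ℝ (Fin d) × EuclideanSpace ℝ (Fin d) → ℝ≥0∞ :=
    fun p => ENNReal.ofReal (max (-⟪ω, p.2 - p.1⟫) 0) * F p with hG
  have hGmeas : Measurable G := by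
    apply Measurable.mul _ hF
    exact ENNReal.measurable_ofReal.comp
      (((hcont.comp (continuous_snd.sub continuous_fst)).neg.max continuous_const).measurable)
  calc ∫⁻ p : EuclideanSpace ℝ (Fin d) × EuclideanSpace ℝ (Fin d),
        ENNReal.ofReal (max ⟪ω, p.2 - p.1⟫ 0) *
          F (p.1 + ⟪ω, p.2 - p.1⟫ • ω, p.2 - ⟪ω, p.2 - p.1⟫ • ω)
      = ∫⁻ p, G (T p) := by
        refine lintegral_congr fun p => ?_
        rw [hG]
        simp only [hflip p, neg_neg]
        rfl
    _ = ∫⁻ p, G p := hTmp.lintegral_comp hGmeas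
end

section
/- Existence of non-uniformly-convergent example data: for every d ≥ 1 there exist a nonnegative Schwartz-class function f₀ on ℝ^d × ℝ^d with ∫ f₀ = 1, a sequence of nonnegative measurable functions f_{0,N} on ℝ^d × ℝ^d with ∫ f_{0,N} = 1 satisfying a uniform Gaussian bound (for some C₀, β₀ > 0, f_{0,N}(x,v) ≤ C₀ e^{−(β₀/2)(|x|²+|v|²)} for all N and all (x,v)), and a decreasing sequence of nonempty open balls B_N ⊆ ℝ^d × ℝ^d with empty intersection and Lebesgue measure at least C (log N)^{−1} for some constant C > 0 and all N ≥ 2, such that ∫ |f_{0,N} − f₀| → 0 as N → ∞ and liminf_{N→∞} inf_{(x,v) ∈ B_N} (f_{0,N}(x,v) − f₀(x,v)) > 0. -/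
open MeasureTheory Filter
open scoped ContDiff

/-- A smooth compactly supported function is a Schwartz function. -/
noncomputable def SchwartzMap.ofCompactSupport {E F : Type*} [NormedAddCommGroup E]
    [NormedSpace ℝ E] [NormedAddCommGroup F] [NormedSpace ℝ F] {f : E → F}
    (hf : ContDiff ℝ ∞ f) (h : HasCompactSupport f) : SchwartzMap E F where
  toFun := f
  smooth' := hf
  decay' := by
    intro k n
    have h1 : HasCompactSupport (iteratedFDeriv ℝ n f) := h.iteratedFDeriv n
    have h2 : Continuous (iteratedFDeriv ℝ n f) :=
      hf.continuous_iteratedFDeriv (by exact_mod_cast le_top)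
    have h3 : HasCompactSupport fun x => ‖x‖ ^ k * ‖iteratedFDeriv ℝ n f x‖ :=
      HasCompactSupport.mul_left h1.norm
    obtain ⟨C, hC⟩ := h3.exists_bound_of_continuous (by continuity)
    exact ⟨C, fun x => by simpa using hC x⟩

noncomputable instance euclidProdHaar (d : ℕ) : Measure.IsAddHaarMeasure
    (volume : Measure (EuclideanSpace ℝ (Fin d) × EuclideanSpace ℝ (Fin d))) :=
  Measure.prod.instIsAddHaarMeasure _ _

set_option maxHeartbeats 1000000 in
/-- Existence of non-uniformly-convergent example data: for every `d ≥ 1` there exist a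
nonnegative Schwartz-class probability density `f₀` on `ℝ^d × ℝ^d`, a sequence of
nonnegative measurable probability densities `f_{0,N}` with a uniform Gaussian bound, and
a decreasing sequence of nonempty open balls `B_N` with empty intersection and Lebesgue
measure at least `C (log N)⁻¹`, such that `∫ |f_{0,N} − f₀| → 0` while
`liminf_N inf_{B_N} (f_{0,N} − f₀) > 0`. -/
theorem exists_nonuniform_example (d : ℕ) (hd : 1 ≤ d) :
    ∃ (f₀ : SchwartzMap (EuclideanSpace ℝ (Fin d) × EuclideanSpace ℝ (Fin d)) ℝ)
      (f0N : ℕ → (EuclideanSpace ℝ (Fin d) × EuclideanSpace ℝ (Fin d)) → ℝ)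
      (C₀ β₀ : ℝ) (c : ℕ → EuclideanSpace ℝ (Fin d) × EuclideanSpace ℝ (Fin d))
      (r : ℕ → ℝ) (C : ℝ),
      (∀ p, 0 ≤ f₀ p) ∧ (∫ p, f₀ p) = 1 ∧
      (∀ N, Measurable (f0N N)) ∧ (∀ N p, 0 ≤ f0N N p) ∧
      (∀ N, (∫ p, f0N N p) = 1) ∧
      0 < C₀ ∧ 0 < β₀ ∧
      (∀ N p, f0N N p ≤ C₀ * Real.exp (-(β₀ / 2) * (‖p.1‖ ^ 2 + ‖p.2‖ ^ 2))) ∧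
      (∀ N, 0 < r N) ∧
      (∀ N, Metric.ball (c (N + 1)) (r (N + 1)) ⊆ Metric.ball (c N) (r N)) ∧
      (⋂ N, Metric.ball (c N) (r N)) = ∅ ∧
      0 < C ∧
      (∀ N : ℕ, 2 ≤ N → ENNReal.ofReal (C / Real.log (N : ℝ)) ≤ volume (Metric.ball (c N) (r N))) ∧
      Tendsto (fun N => ∫ p, |f0N N p - f₀ p|) atTop (nhds 0) ∧
      0 < liminf (fun N =>
        ⨅ p : Metric.ball (c N) (r N), (f0N N (p : _) - f₀ (p : _))) atTop := by
  classical
  haveI : Nontrivial (EuclideanSpace ℝ (Fin d)) :=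
    Module.nontrivial_of_finrank_pos (R := ℝ) (by simp [finrank_euclideanSpace_fin]; omega)
  -- basic objects
  set e : EuclideanSpace ℝ (Fin d) := EuclideanSpace.single ⟨0, hd⟩ (1 : ℝ) with he_def
  have he : ‖e‖ = 1 := by simp [he_def, EuclideanSpace.norm_single]
  set s : ℕ → ℝ := fun N => 1 + Real.log N with hs_def
  have hs1 : ∀ N, 1 ≤ s N := fun N => le_add_of_nonneg_right (Real.log_natCast_nonneg N)
  have hs_pos : ∀ N, 0 < s N := fun N => lt_of_lt_of_le one_pos (hs1 N)
  have hs_mono : ∀ N, s N ≤ s (N + 1) := by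
    intro N
    rcases Nat.eq_zero_or_pos N with h | h
    · subst h; simp [hs_def]
    · have := Real.log_le_log (x := (N:ℝ)) (y := ((N+1 : ℕ) : ℝ)) (by exact_mod_cast h) (by exact_mod_cast N.le_succ)
      show 1 + Real.log (N:ℝ) ≤ 1 + Real.log ((N+1 : ℕ) : ℝ); linarith
  have hs_top : Tendsto s atTop atTop :=
    tendsto_atTop_add_const_left _ 1
      (Real.tendsto_log_atTop.comp tendsto_natCast_atTop_atTop)
  set r : ℕ → ℝ := fun N => s N ^ (-(1 / (2 * (d : ℝ)))) with hr_def
  have hd2 : (0:ℝ) < 2 * (d : ℝ) := by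
    have : (1:ℝ) ≤ (d:ℝ) := by exact_mod_cast hd
    linarith
  have hr_pos : ∀ N, 0 < r N := fun N => Real.rpow_pos_of_pos (hs_pos N) _
  have hexp_nonpos : -(1 / (2 * (d : ℝ))) ≤ 0 := neg_nonpos.2 (by positivity)
  have hr_le_one : ∀ N, r N ≤ 1 := fun N =>
    Real.rpow_le_one_of_one_le_of_nonpos (hs1 N) hexp_nonpos
  have hr_anti : ∀ N, r (N + 1) ≤ r N := fun N =>
    Real.rpow_le_rpow_of_nonpos (hs_pos N) (hs_mono N) hexp_nonpos
  have hr0 : r 0 = 1 := by simp [hr_def, hs_def]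
  have hr_tend : Tendsto r atTop (nhds 0) := by
    have := (tendsto_rpow_neg_atTop (y := 1 / (2 * (d : ℝ))) (by positivity)).comp hs_top
    exact this
  have hr2d : ∀ N, r N ^ (2 * d) = (s N)⁻¹ := by
    intro N
    have h1 : (r N) ^ (2 * d) = (s N) ^ ((-(1 / (2 * (d : ℝ)))) * (2 * d : ℕ)) := by
      rw [← Real.rpow_natCast (r N) (2 * d), hr_def, ← Real.rpow_mul (hs_pos N).le]
    rw [h1]
    have h2 : (-(1 / (2 * (d : ℝ)))) * ((2 * d : ℕ) : ℝ) = -1 := by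
      push_cast
      field_simp
    rw [h2, Real.rpow_neg_one]
  -- centers
  set c : ℕ → EuclideanSpace ℝ (Fin d) × EuclideanSpace ℝ (Fin d) :=
    fun N => (r N • e, 0) with hc_def
  -- volume of the balls
  set v : ENNReal := volume (Metric.ball (0 : EuclideanSpace ℝ (Fin d)) 1) with hv_def
  have hv_pos : 0 < v := Metric.measure_ball_pos _ _ one_pos
  have hv_fin : v < ⊤ := measure_ball_lt_top
  set K : ℝ := v.toReal ^ 2 with hK_def
  have hK_pos : 0 < K := by
    have := ENNReal.toReal_pos hv_pos.ne' hv_fin.ne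
    positivity
  have hvol : ∀ N, volume (Metric.ball (c N) (r N)) = ENNReal.ofReal (K / s N) := by
    intro N
    have h1 : Metric.ball (c N) (r N)
        = Metric.ball ((c N).1) (r N) ×ˢ Metric.ball ((c N).2) (r N) := by
      rw [ball_prod_same]
    have hball : ∀ x : EuclideanSpace ℝ (Fin d),
        volume (Metric.ball x (r N)) = ENNReal.ofReal (r N ^ d) * v := by
      intro x
      rw [Measure.addHaar_ball volume x (hr_pos N).le, finrank_euclideanSpace_fin, hv_def]
    have hrd : (0:ℝ) ≤ r N ^ d := pow_nonneg (hr_pos N).le d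
    have hreal : r N ^ d * v.toReal * (r N ^ d * v.toReal) = K / s N := by
      have hpp : r N ^ d * r N ^ d = (s N)⁻¹ := by
        rw [← pow_add, ← two_mul]; exact hr2d N
      calc r N ^ d * v.toReal * (r N ^ d * v.toReal)
          = (r N ^ d * r N ^ d) * v.toReal ^ 2 := by ring
        _ = (s N)⁻¹ * K := by rw [hpp, hK_def]
        _ = K / s N := by rw [inv_mul_eq_div]
    rw [h1, MeasureTheory.Measure.volume_eq_prod, Measure.prod_prod, hball, hball,
      ← ENNReal.ofReal_toReal hv_fin.ne, ← ENNReal.ofReal_mul hrd,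
      ← ENNReal.ofReal_mul (mul_nonneg hrd ENNReal.toReal_nonneg), hreal]
  set m : ℕ → ℝ := fun N => K / s N with hm_def
  have hm_pos : ∀ N, 0 < m N := fun N => div_pos hK_pos (hs_pos N)
  have hm_le : ∀ N, m N ≤ K := fun N => by
    rw [hm_def]
    exact div_le_self hK_pos.le (hs1 N)
  have hm_toReal : ∀ N, (volume (Metric.ball (c N) (r N))).toReal = m N := by
    intro N
    rw [hvol N, ENNReal.toReal_ofReal (hm_pos N).le]
  have hm_tend : Tendsto m atTop (nhds 0) := by
    simpa using Tendsto.const_div_atTop hs_top K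
  -- the bump function
  set b : ContDiffBump (0 : EuclideanSpace ℝ (Fin d) × EuclideanSpace ℝ (Fin d)) :=
    ⟨1, 2, one_pos, one_lt_two⟩ with hb_def
  set g : (EuclideanSpace ℝ (Fin d) × EuclideanSpace ℝ (Fin d)) → ℝ :=
    b.normed volume with hg_def
  have hg_nonneg : ∀ p, 0 ≤ g p := fun p => b.nonneg_normed p
  have hg_int1 : (∫ p, g p) = 1 := b.integral_normed
  have hg_integrable : Integrable g := b.integrable_normed
  set Mb : ℝ := (∫ p, (b : _ → ℝ) p)⁻¹ with hMb_def
  have hIb_pos : 0 < ∫ p, (b : _ → ℝ) p := b.integral_pos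
  have hMb_pos : 0 < Mb := by rw [hMb_def]; positivity
  have hg_le : ∀ p, g p ≤ Mb := by
    intro p
    rw [hg_def, ContDiffBump.normed_def, hMb_def, div_eq_mul_inv]
    have := b.le_one (x := p)
    nlinarith [hIb_pos, b.nonneg (x := p)]
  have hg_zero : ∀ p : EuclideanSpace ℝ (Fin d) × EuclideanSpace ℝ (Fin d),
      2 ≤ ‖p‖ → g p = 0 := by
    intro p hp
    have : p ∉ Function.support g := by
      rw [hg_def, b.support_normed_eq]
      intro hmem
      rw [Metric.mem_ball, dist_zero_right] at hmem
      have : b.rOut = 2 := rfl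
      rw [this] at hmem
      linarith
    simpa using Function.notMem_support.mp this
  set f₀ : SchwartzMap (EuclideanSpace ℝ (Fin d) × EuclideanSpace ℝ (Fin d)) ℝ :=
    SchwartzMap.ofCompactSupport (f := g) (b.contDiff_normed (n := ⊤)) b.hasCompactSupport_normed
    with hf₀_def
  have hf₀_coe : ∀ p, f₀ p = g p := fun p => rfl
  -- delta and the sequence
  set δ : ℝ := (1 + K)⁻¹ with hδ_def
  have hδ_pos : 0 < δ := by rw [hδ_def]; positivity
  have hδm_lt : ∀ N, δ * m N < 1 := by
    intro N
    have h1 : δ * m N ≤ δ * K := by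
      apply mul_le_mul_of_nonneg_left (hm_le N) hδ_pos.le
    have h2 : δ * K < 1 := by
      rw [hδ_def]
      rw [inv_mul_eq_div, div_lt_one (by positivity)]
      linarith
    linarith
  have hδm_nonneg : ∀ N, 0 ≤ δ * m N := fun N => by positivity
  set f0N : ℕ → (EuclideanSpace ℝ (Fin d) × EuclideanSpace ℝ (Fin d)) → ℝ :=
    fun N p => (1 - δ * m N) * g p + Set.indicator (Metric.ball (c N) (r N)) (fun _ => δ) p
    with hf0N_def
  have hind_integrable : ∀ N, Integrable
      (Set.indicator (Metric.ball (c N) (r N)) (fun _ => δ)) := by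
    intro N
    rw [integrable_indicator_iff measurableSet_ball]
    exact integrableOn_const measure_ball_lt_top.ne
  have hind_int : ∀ N, (∫ p, Set.indicator (Metric.ball (c N) (r N)) (fun _ => δ) p) = m N * δ := by
    intro N
    rw [MeasureTheory.integral_indicator_const (δ) measurableSet_ball, measureReal_def, hm_toReal N,
      smul_eq_mul]
  -- ball geometry
  have hball_mono : ∀ N, Metric.ball (c (N+1)) (r (N+1)) ⊆ Metric.ball (c N) (r N) := by
    intro N
    apply Metric.ball_subset_ball'
    have hdist : dist (c (N+1)) (c N) = r N - r (N+1) := by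
      rw [dist_eq_norm]
      have h0 : c (N+1) - c N = ((r (N+1) - r N) • e, (0 : EuclideanSpace ℝ (Fin d))) := by
        simp only [hc_def]
        rw [Prod.mk_sub_mk, sub_smul, sub_zero]
      rw [h0, Prod.norm_def]
      simp only [norm_zero, norm_smul, he, mul_one, Real.norm_eq_abs]
      rw [abs_of_nonpos (by linarith [hr_anti N]), max_eq_left (by linarith [hr_anti N])]
      ring
    rw [hdist]
    linarith
  have hnorm_c : ∀ N, ‖c N‖ = r N := by
    intro N
    rw [hc_def]
    rw [Prod.norm_def]
    simp only [norm_zero]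
    rw [norm_smul, he, mul_one, Real.norm_eq_abs, abs_of_nonneg (hr_pos N).le]
    exact max_eq_left (hr_pos N).le
  have hball_sub2 : ∀ N p, p ∈ Metric.ball (c N) (r N) → ‖p‖ < 2 := by
    intro N p hp
    rw [Metric.mem_ball] at hp
    calc ‖p‖ ≤ dist p (c N) + ‖c N‖ := by
          rw [dist_eq_norm]
          simpa using norm_add_le (p - c N) (c N)
      _ < r N + r N := by
          rw [hnorm_c N]; exact add_lt_add_left hp _
      _ ≤ 2 := by have := hr_le_one N; linarith
  have hinter : (⋂ N, Metric.ball (c N) (r N)) = ∅ := by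
    rw [Set.eq_empty_iff_forall_notMem]
    intro p hp
    simp only [Set.mem_iInter] at hp
    have hfst : ∀ N, dist p.1 (r N • e) < r N := by
      intro N
      have := hp N
      rw [Metric.mem_ball, Prod.dist_eq] at this
      exact lt_of_le_of_lt (le_max_left _ _) this
    have hbound : ∀ N, ‖p.1‖ < 2 * r N := by
      intro N
      have h1 : ‖p.1‖ ≤ dist p.1 (r N • e) + ‖r N • e‖ := by
        rw [dist_eq_norm]
        simpa using norm_add_le (p.1 - r N • e) (r N • e)
      have h2 : ‖r N • e‖ = r N := by
        rw [norm_smul, he, mul_one, Real.norm_eq_abs, abs_of_nonneg (hr_pos N).le]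
      have := hfst N
      rw [h2] at h1
      linarith
    have hle : ‖p.1‖ ≤ 0 := by
      have h2r : Tendsto (fun N => 2 * r N) atTop (nhds (2 * 0)) := hr_tend.const_mul 2
      rw [mul_zero] at h2r
      exact ge_of_tendsto h2r (Eventually.of_forall fun N => (hbound N).le)
    have hp1 : p.1 = 0 := by
      rwa [← norm_le_zero_iff]
    have := hfst 0
    rw [hp1, dist_eq_norm, zero_sub, norm_neg, norm_smul, he, mul_one, Real.norm_eq_abs,
      abs_of_nonneg (hr_pos 0).le] at this
    exact lt_irrefl _ this
  -- constants
  set C : ℝ := K * Real.log 2 / (1 + Real.log 2) with hC_def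
  have hlog2 : 0 < Real.log 2 := Real.log_pos one_lt_two
  have hC_pos : 0 < C := by rw [hC_def]; positivity
  have hC_bound : ∀ N : ℕ, 2 ≤ N →
      ENNReal.ofReal (C / Real.log (N : ℝ)) ≤ volume (Metric.ball (c N) (r N)) := by
    intro N hN
    rw [hvol N]
    apply ENNReal.ofReal_le_ofReal
    have hlogN : Real.log 2 ≤ Real.log N :=
      Real.log_le_log (by norm_num) (by exact_mod_cast hN)
    have hlogN_pos : 0 < Real.log N := lt_of_lt_of_le hlog2 hlogN
    have hsN : s N = 1 + Real.log N := by simp [hs_def]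
    rw [hC_def, hsN, div_div, div_le_div_iff₀ (by positivity) (by positivity)]
    nlinarith [hK_pos, hlog2, hlogN]
  -- main analytic facts
  refine ⟨f₀, f0N, (Mb + δ) * Real.exp 4, 1, c, r, C, ?_, ?_, ?_, ?_, ?_, ?_, ?_, ?_, ?_,
    hball_mono, hinter, hC_pos, hC_bound, ?_, ?_⟩
  · intro p; rw [hf₀_coe]; exact hg_nonneg p
  · simpa only [hf₀_coe] using hg_int1
  · intro N
    apply Measurable.add
    · exact (b.continuous_normed.measurable).const_mul _
    · exact (measurable_const.indicator measurableSet_ball)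
  · intro N p
    apply add_nonneg
    · exact mul_nonneg (by linarith [hδm_lt N]) (hg_nonneg p)
    · exact Set.indicator_nonneg (fun _ _ => hδ_pos.le) p
  · intro N
    simp only [hf0N_def]
    rw [integral_add (hg_integrable.const_mul _) (hind_integrable N),
      integral_const_mul _ _, hg_int1, hind_int N]
    ring
  · positivity
  · norm_num
  · -- gaussian bound
    intro N p
    by_cases hp : ‖p‖ < 2
    · have h1 : f0N N p ≤ Mb + δ := by
        simp only [hf0N_def]
        have hterm1 : (1 - δ * m N) * g p ≤ Mb := by
          calc (1 - δ * m N) * g p ≤ 1 * g p := by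
                apply mul_le_mul_of_nonneg_right _ (hg_nonneg p)
                linarith [hδm_nonneg N]
            _ = g p := one_mul _
            _ ≤ Mb := hg_le p
        have hterm2 : Set.indicator (Metric.ball (c N) (r N)) (fun _ => δ) p ≤ δ := by
          apply Set.indicator_le' (fun _ _ => le_refl δ) (fun _ _ => hδ_pos.le)
        linarith
      have h2 : ‖p.1‖ ^ 2 + ‖p.2‖ ^ 2 ≤ 8 := by
        have ha : ‖p.1‖ ≤ ‖p‖ := norm_fst_le p
        have hb2 : ‖p.2‖ ≤ ‖p‖ := norm_snd_le p
        nlinarith [norm_nonneg p.1, norm_nonneg p.2, norm_nonneg p]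
      have h3 : Real.exp (-4) ≤ Real.exp (-(1/2 : ℝ) * (‖p.1‖ ^ 2 + ‖p.2‖ ^ 2)) := by
        apply Real.exp_le_exp.2
        nlinarith
      calc f0N N p ≤ Mb + δ := h1
        _ = (Mb + δ) * Real.exp 4 * Real.exp (-4) := by
            rw [mul_assoc, ← Real.exp_add]; norm_num
        _ ≤ (Mb + δ) * Real.exp 4 * Real.exp (-(1/2 : ℝ) * (‖p.1‖ ^ 2 + ‖p.2‖ ^ 2)) := by
            apply mul_le_mul_of_nonneg_left h3 (by positivity)
        _ = (Mb + δ) * Real.exp 4 * Real.exp (-(1 / 2) * (‖p.1‖ ^ 2 + ‖p.2‖ ^ 2)) := by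
            norm_num
    · push_neg at hp
      have h1 : g p = 0 := hg_zero p hp
      have h2 : Set.indicator (Metric.ball (c N) (r N)) (fun _ => δ) p = 0 := by
        apply Set.indicator_of_notMem
        intro hmem
        exact absurd (hball_sub2 N p hmem) (not_lt.2 hp)
      simp only [hf0N_def]
      simp only [h1, h2, mul_zero, add_zero]
      positivity
  · exact hr_pos
  · -- L1 convergence
    have hdiff_eq : ∀ N p, f0N N p - f₀ p
        = Set.indicator (Metric.ball (c N) (r N)) (fun _ => δ) p - (δ * m N) * g p := by
      intro N p
      simp only [hf0N_def, hf₀_coe]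
      ring
    have hdiff_integrable : ∀ N, Integrable (fun p => |f0N N p - f₀ p|) := by
      intro N
      apply Integrable.abs
      have : (fun p => f0N N p - f₀ p)
          = fun p => Set.indicator (Metric.ball (c N) (r N)) (fun _ => δ) p - (δ * m N) * g p := by
        funext p; exact hdiff_eq N p
      rw [this]
      exact (hind_integrable N).sub (hg_integrable.const_mul _)
    have hbound : ∀ N, (∫ p, |f0N N p - f₀ p|) ≤ m N * δ + δ * m N := by
      intro N
      have hptwise : ∀ p, |f0N N p - f₀ p|
          ≤ Set.indicator (Metric.ball (c N) (r N)) (fun _ => δ) p + (δ * m N) * g p := by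
        intro p
        rw [hdiff_eq N p]
        have h1 : 0 ≤ Set.indicator (Metric.ball (c N) (r N)) (fun _ => δ) p :=
          Set.indicator_nonneg (fun _ _ => hδ_pos.le) p
        have h2 : 0 ≤ (δ * m N) * g p := mul_nonneg (hδm_nonneg N) (hg_nonneg p)
        rw [abs_sub_comm]
        calc |(δ * m N) * g p - Set.indicator (Metric.ball (c N) (r N)) (fun _ => δ) p|
            ≤ |(δ * m N) * g p| + |Set.indicator (Metric.ball (c N) (r N)) (fun _ => δ) p| :=
              abs_sub _ _
          _ = (δ * m N) * g p + Set.indicator (Metric.ball (c N) (r N)) (fun _ => δ) p := by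
              rw [abs_of_nonneg h2, abs_of_nonneg h1]
          _ = _ := by ring
      calc (∫ p, |f0N N p - f₀ p|)
          ≤ ∫ p, (Set.indicator (Metric.ball (c N) (r N)) (fun _ => δ) p + (δ * m N) * g p) := by
            apply integral_mono (hdiff_integrable N)
              ((hind_integrable N).add (hg_integrable.const_mul _)) hptwise
        _ = m N * δ + δ * m N := by
            rw [integral_add (hind_integrable N) (hg_integrable.const_mul _),
              integral_const_mul _ _, hg_int1, hind_int N]
            ring
    apply squeeze_zero (fun N => integral_nonneg (fun p => abs_nonneg _)) hbound
    have : Tendsto (fun N => m N * δ + δ * m N) atTop (nhds (0 * δ + δ * 0)) :=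
      (hm_tend.mul_const δ).add (hm_tend.const_mul δ)
    simpa using this
  · -- liminf positivity
    have hev : ∀ᶠ N in atTop, δ / 2 ≤
        ⨅ p : Metric.ball (c N) (r N), (f0N N (↑p : EuclideanSpace ℝ (Fin d) × EuclideanSpace ℝ (Fin d)) - f₀ (↑p : EuclideanSpace ℝ (Fin d) × EuclideanSpace ℝ (Fin d))) := by
      have hsmall : ∀ᶠ N in atTop, m N < (2 * Mb)⁻¹ := by
        apply hm_tend.eventually (gt_mem_nhds (by positivity))
      filter_upwards [hsmall] with N hN
      haveI : Nonempty (Metric.ball (c N) (r N)) :=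
        (Metric.nonempty_ball.2 (hr_pos N)).to_subtype
      apply le_ciInf
      intro p
      have hmem : (↑p : EuclideanSpace ℝ (Fin d) × EuclideanSpace ℝ (Fin d)) ∈ Metric.ball (c N) (r N) := p.2
      have hind : Set.indicator (Metric.ball (c N) (r N)) (fun _ => δ) (↑p : EuclideanSpace ℝ (Fin d) × EuclideanSpace ℝ (Fin d)) = δ :=
        Set.indicator_of_mem hmem (fun _ => δ)
      simp only [hf0N_def, hf₀_coe]
      rw [hind]
      have h1 : (δ * m N) * g (↑p : EuclideanSpace ℝ (Fin d) × EuclideanSpace ℝ (Fin d)) ≤ (δ * m N) * Mb :=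
        mul_le_mul_of_nonneg_left (hg_le _) (hδm_nonneg N)
      have h2 : (δ * m N) * Mb ≤ δ / 2 := by
        have : m N * Mb ≤ 1 / 2 := by
          have := mul_le_mul_of_nonneg_right hN.le hMb_pos.le
          calc m N * Mb ≤ (2 * Mb)⁻¹ * Mb := this
            _ = 1 / 2 := by field_simp
        calc (δ * m N) * Mb = δ * (m N * Mb) := by ring
          _ ≤ δ * (1 / 2) := mul_le_mul_of_nonneg_left this hδ_pos.le
          _ = δ / 2 := by ring
      nlinarith [hg_nonneg (↑p : EuclideanSpace ℝ (Fin d) × EuclideanSpace ℝ (Fin d))]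
    have hcob : IsCoboundedUnder (· ≥ ·) atTop (fun N : ℕ =>
        ⨅ p : Metric.ball (c N) (r N), (f0N N (↑p : EuclideanSpace ℝ (Fin d) × EuclideanSpace ℝ (Fin d)) - f₀ (↑p : EuclideanSpace ℝ (Fin d) × EuclideanSpace ℝ (Fin d)))) := by
      apply Filter.IsBoundedUnder.isCoboundedUnder_ge
      apply Filter.isBoundedUnder_of
      refine ⟨δ, fun N => ?_⟩
      haveI : Nonempty (Metric.ball (c N) (r N)) :=
        (Metric.nonempty_ball.2 (hr_pos N)).to_subtype
      have hbdd : BddBelow (Set.range fun p : Metric.ball (c N) (r N) =>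
          (f0N N (↑p : EuclideanSpace ℝ (Fin d) × EuclideanSpace ℝ (Fin d)) - f₀ (↑p : EuclideanSpace ℝ (Fin d) × EuclideanSpace ℝ (Fin d)))) := by
        refine ⟨δ - (δ * m N) * Mb, ?_⟩
        rintro x ⟨p, rfl⟩
        have hmem : (↑p : EuclideanSpace ℝ (Fin d) × EuclideanSpace ℝ (Fin d)) ∈ Metric.ball (c N) (r N) := p.2
        simp only [hf0N_def, hf₀_coe]
        rw [Set.indicator_of_mem hmem]
        have h1 : (δ * m N) * g (↑p : EuclideanSpace ℝ (Fin d) × EuclideanSpace ℝ (Fin d)) ≤ (δ * m N) * Mb :=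
          mul_le_mul_of_nonneg_left (hg_le _) (hδm_nonneg N)
        nlinarith [hg_nonneg (↑p : EuclideanSpace ℝ (Fin d) × EuclideanSpace ℝ (Fin d))]
      have hcen : (c N) ∈ Metric.ball (c N) (r N) := Metric.mem_ball_self (hr_pos N)
      calc (⨅ p : Metric.ball (c N) (r N), (f0N N (↑p : EuclideanSpace ℝ (Fin d) × EuclideanSpace ℝ (Fin d)) - f₀ (↑p : EuclideanSpace ℝ (Fin d) × EuclideanSpace ℝ (Fin d))))
          ≤ f0N N (c N) - f₀ (c N) := ciInf_le hbdd ⟨c N, hcen⟩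
        _ ≤ δ := by
            simp only [hf0N_def, hf₀_coe]
            rw [Set.indicator_of_mem hcen]
            nlinarith [hg_nonneg (c N), hδm_nonneg N]
    have := le_liminf_of_le hcob hev
    calc (0:ℝ) < δ / 2 := by positivity
      _ ≤ _ := this
end
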